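/- Fix r ∈ ℕ. Then m([2]^d, r) ≤ (1+o(1))·(1/r)·C(d, r−1) as d → ∞; that is, for every ε > 0 there exists d₀ such that for all d ≥ d₀, m([2]^d, r) ≤ (1+ε)·(1/r)·C(d, r−1). -/

import Mathlib

/-- Adjacency in the grid graph `[n]^d`: two vertices are adjacent iff they differ
by exactly 1 in a single coordinate. -/
def gridAdj (n d : ℕ) (x y : Fin d → Fin n) : Prop :=
  ∃ i, ((x i : ℕ) + 1 = (y i : ℕ) ∨ (y i : ℕ) + 1 = (x i : ℕ)) ∧ ∀ j, j ≠ i → x j = y j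

/-- The grid graph `[n]^d`. -/
def gridGraph (n d : ℕ) : SimpleGraph (Fin d → Fin n) where
  Adj := gridAdj n d
  symm := by
    constructor
    rintro x y ⟨i, h1, h2⟩
    exact ⟨i, h1.symm, fun j hj => (h2 j hj).symm⟩
  loopless := by
    constructor
    rintro x ⟨i, h1, -⟩
    omega

/-- Graph distance from a vertex to a set in the grid graph. -/
noncomputable def gridSetDist (n d : ℕ) (x : Fin d → Fin n) (S : Set (Fin d → Fin n)) : ℕ :=
  sInf (Set.image (fun y => (gridGraph n d).dist x y) S)

/-- One step of `r`-neighbour bootstrap percolation. -/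
def bootStep {V : Type*} (adj : V → V → Prop) (r : ℕ) (A : Set V) : Set V :=
  A ∪ {v | r ≤ {u | adj v u ∧ u ∈ A}.ncard}

/-- The closure `[A]` of a set under `r`-neighbour bootstrap percolation. -/
def bootClosure {V : Type*} (adj : V → V → Prop) (r : ℕ) (A : Set V) : Set V :=
  ⋃ t, (bootStep adj r)^[t] A

/-- The dimension of a cube in `[n]^d`: the sum over coordinates of
(number of values taken in that coordinate minus one). -/
noncomputable def cubeDim {n d : ℕ} (Q : Set (Fin d → Fin n)) : ℕ :=
  ∑ i : Fin d, ((Set.image (fun x => x i) Q).ncard - 1)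

/-- A cube in `[n]^d` is a (nonempty) product of integer intervals. -/
def IsCube {n d : ℕ} (Q : Set (Fin d → Fin n)) : Prop :=
  ∃ lo hi : Fin d → Fin n, (∀ i, lo i ≤ hi i) ∧
    Q = {x | ∀ i, lo i ≤ x i ∧ x i ≤ hi i}

/-- A hypercube in `[n]^d` is a cube all of whose sides have length 1 or 2,
i.e. a copy of some `[2]^m`. -/
def IsHypercube {n d : ℕ} (Q : Set (Fin d → Fin n)) : Prop :=
  ∃ lo hi : Fin d → Fin n, (∀ i, lo i ≤ hi i ∧ (hi i : ℕ) ≤ (lo i : ℕ) + 1) ∧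
    Q = {x | ∀ i, lo i ≤ x i ∧ x i ≤ hi i}

/-- `Q` is internally spanned by `A`: the bootstrap closure of `A ∩ Q` is `Q`. -/
def IntSpans (n d : ℕ) (A Q : Set (Fin d → Fin n)) : Prop :=
  bootClosure (gridAdj n d) 2 (A ∩ Q) = Q

/-- A set is constant on the coordinates in `J`. -/
def ConstOn {n d : ℕ} (J : Set (Fin d)) (C : Set (Fin d → Fin n)) : Prop :=
  ∀ i ∈ J, ∀ x ∈ C, ∀ y ∈ C, x i = y i

/-- `C` belongs to `Q⟨J⟩`: `C` is a maximal subcube of `Q` constant on the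
coordinates in `J`. -/
def MaxConstSubcube (n d : ℕ) (Q : Set (Fin d → Fin n)) (J : Set (Fin d))
    (C : Set (Fin d → Fin n)) : Prop :=
  IsCube C ∧ C ⊆ Q ∧ ConstOn J C ∧
    ∀ C', IsCube C' → C' ⊆ Q → ConstOn J C' → C ⊆ C' → C' = C

/-- `{j,k}` is a final pair for `A` in `Q`. -/
def FinalPair (n d : ℕ) (A Q : Set (Fin d → Fin n)) (j k : Fin d) : Prop :=
  IntSpans n d A Q ∧
    ∃ C, MaxConstSubcube n d Q {j, k} C ∧ IntSpans n d A C ∧ (A \ C).ncard = 1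

/-- `{i}` is a final element for `A` in `Q`. -/
def FinalElt (n d : ℕ) (A Q : Set (Fin d → Fin n)) (i : Fin d) : Prop :=
  IntSpans n d A Q ∧
    ∃ C, MaxConstSubcube n d Q {i} C ∧ IntSpans n d A C ∧ (A \ C).ncard = 1

/-- `A` sequentially spans the hypercube `Q` (of dimension `2t`):
`|A| = t+1` and `A` admits an ordering `(a 0, …, a t)` with
`dist (a (j+1), [{a 0,…,a j}]) = 2` for all `j < t`. -/
def SeqSpans (n d : ℕ) (A Q : Set (Fin d → Fin n)) : Prop :=
  ∃ t : ℕ, cubeDim Q = 2 * t ∧ A ⊆ Q ∧ A.ncard = t + 1 ∧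
    bootClosure (gridAdj n d) 2 A = Q ∧
    ∃ a : Fin (t + 1) → (Fin d → Fin n), Function.Injective a ∧ Set.range a = A ∧
      ∀ j : Fin t, gridSetDist n d (a j.succ)
        (bootClosure (gridAdj n d) 2 (a '' {i | (i : ℕ) ≤ (j : ℕ)})) = 2

/-- `{j,k}` is an ending for `A` (in the full cube): some `A' ⊆ A` sequentially
spans one of the maximal subcubes constant on `{j,k}`. -/
def EndingPair (n d : ℕ) (A : Set (Fin d → Fin n)) (j k : Fin d) : Prop :=
  ∃ A', A' ⊆ A ∧ ∃ C, MaxConstSubcube n d Set.univ {j, k} C ∧ SeqSpans n d A' C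

/-- `Δ(b,C)`: the set of directions in which the vertex `b` and the cube `C`
are both constant and differ. -/
def Delta {n d : ℕ} (b : Fin d → Fin n) (C : Set (Fin d → Fin n)) : Set (Fin d) :=
  {i | (∀ x ∈ C, ∀ y ∈ C, x i = y i) ∧ ∀ x ∈ C, x i ≠ b i}

/-- The probability of an event `E` for a random subset `A ~ Bin(V,p)`,
each element included independently with probability `p`. -/
noncomputable def binProb {V : Type*} [Fintype V] (p : ℝ) (E : Finset V → Prop) : ℝ :=
  ∑ A : Finset V,
    Set.indicator {B | E B} (fun B => p ^ B.card * (1 - p) ^ (Fintype.card V - B.card)) A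

/-- The expectation of `f` for a random subset `A ~ Bin(V,p)`. -/
noncomputable def binExp {V : Type*} [Fintype V] (p : ℝ) (f : Finset V → ℝ) : ℝ :=
  ∑ A : Finset V, f A * (p ^ A.card * (1 - p) ^ (Fintype.card V - A.card))

/-- `P(ℓ,p)`: the probability that `A ~ Bin([2]^ℓ,p)` internally spans `[2]^ℓ`. -/
noncomputable def Pprob (ℓ : ℕ) (p : ℝ) : ℝ :=
  binProb p (fun A : Finset (Fin ℓ → Fin 2) =>
    bootClosure (gridAdj 2 ℓ) 2 (↑A : Set (Fin ℓ → Fin 2)) = Set.univ)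

/-- `Q(2ℓ,p)`: the probability that `A ~ Bin([2]^{2ℓ},p)` sequentially
internally spans `[2]^{2ℓ}`. -/
noncomputable def Qprob (ℓ : ℕ) (p : ℝ) : ℝ :=
  binProb p (fun A : Finset (Fin (2 * ℓ) → Fin 2) =>
    SeqSpans 2 (2 * ℓ) (↑A : Set (Fin (2 * ℓ) → Fin 2)) Set.univ)

/-- `|𝒮(ℓ)|`: the number of `(ℓ+1)`-subsets of `[2]^{2ℓ}` which sequentially span it. -/
noncomputable def Scard (ℓ : ℕ) : ℕ :=
  {A : Set (Fin (2 * ℓ) → Fin 2) | SeqSpans 2 (2 * ℓ) A Set.univ}.ncard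

/-- The probability that `A ~ Bin([n]^d,p)` percolates in `r`-neighbour
bootstrap percolation. -/
noncomputable def percProb (n d r : ℕ) (p : ℝ) : ℝ :=
  binProb p (fun A : Finset (Fin d → Fin n) =>
    bootClosure (gridAdj n d) r (↑A : Set (Fin d → Fin n)) = Set.univ)

/-- The critical probability `p_c([n]^d, r)`. -/
noncomputable def pc (n d r : ℕ) : ℝ :=
  sInf {p : ℝ | 0 ≤ p ∧ p ≤ 1 ∧ 1 / 2 ≤ percProb n d r p}

/-- The series `x ↦ ∑_{k≥0} (-1)^k x^k / (2^{k²-k} k!)`, whose smallest positive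
root is `λ ≈ 1.166`. -/
noncomputable def lamSeries (x : ℝ) : ℝ :=
  ∑' k : ℕ, (-1 : ℝ) ^ k * x ^ k / (2 ^ (k ^ 2 - k) * (Nat.factorial k))

/-- `m([2]^d, r)`: the minimum size of a set percolating in `r`-neighbour
bootstrap percolation on the hypercube `[2]^d`. -/
noncomputable def minPercCard (d r : ℕ) : ℕ :=
  sInf {k : ℕ | ∃ A : Finset (Fin d → Fin 2), A.card = k ∧
    bootClosure (gridAdj 2 d) r (↑A : Set (Fin d → Fin 2)) = Set.univ}

section AuxBoot

open Finset

variable {V : Type*} [Fintype V] {adj : V → V → Prop} {r : ℕ} {A : Set V}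

lemma bootIter_mono_t (adj : V → V → Prop) (r : ℕ) (A : Set V) :
    Monotone (fun t => (bootStep adj r)^[t] A) := by
  apply monotone_nat_of_le_succ
  intro t
  rw [Function.iterate_succ_apply']
  exact Set.subset_union_left

lemma subset_bootClosure (adj : V → V → Prop) (r : ℕ) (A : Set V) :
    A ⊆ bootClosure adj r A :=
  fun v hv => Set.mem_iUnion.2 ⟨0, hv⟩

lemma finset_subset_iterate (s : Finset V)
    (h : ∀ u ∈ s, u ∈ bootClosure adj r A) :
    ∃ T, ∀ u ∈ s, u ∈ (bootStep adj r)^[T] A := by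
  classical
  induction s using Finset.induction_on with
  | empty => exact ⟨0, by simp⟩
  | @insert a s ha ih =>
    obtain ⟨T₁, hT₁⟩ := ih (fun u hu => h u (Finset.mem_insert_of_mem hu))
    obtain ⟨T₂, hT₂⟩ := Set.mem_iUnion.1 (h a (Finset.mem_insert_self a s))
    refine ⟨max T₁ T₂, ?_⟩
    intro u hu
    rcases Finset.mem_insert.1 hu with rfl | hu
    · exact bootIter_mono_t adj r A (le_max_right T₁ T₂) hT₂
    · exact bootIter_mono_t adj r A (le_max_left T₁ T₂) (hT₁ u hu)

lemma bootClosure_closed {v : V} (s : Finset V) (hcard : r ≤ s.card)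
    (h : ∀ u ∈ s, adj v u ∧ u ∈ bootClosure adj r A) :
    v ∈ bootClosure adj r A := by
  obtain ⟨T, hT⟩ := finset_subset_iterate s (fun u hu => (h u hu).2)
  have hv : v ∈ (bootStep adj r)^[T + 1] A := by
    rw [Function.iterate_succ_apply']
    refine Set.mem_union_right _ ?_
    show r ≤ _
    have hsub : (↑s : Set V) ⊆ {u | adj v u ∧ u ∈ (bootStep adj r)^[T] A} :=
      fun u hu => ⟨(h u (Finset.mem_coe.1 hu)).1, hT u (Finset.mem_coe.1 hu)⟩
    calc r ≤ s.card := hcard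
      _ = (↑s : Set V).ncard := (Set.ncard_coe_finset s).symm
      _ ≤ _ := Set.ncard_le_ncard hsub (Set.toFinite _)
  exact Set.mem_iUnion.2 ⟨T + 1, hv⟩

end AuxBoot

section AuxDesign

open Finset

variable (d : ℕ) [NeZero d]

/-- Coordinates as elements of `ZMod d`. -/
def zc (i : Fin d) : ZMod d := (i.val : ZMod d)

lemma zc_inj : Function.Injective (zc d) := by
  intro i j h
  have h' := congrArg ZMod.val h
  rw [zc, zc, ZMod.val_cast_of_lt i.isLt, ZMod.val_cast_of_lt j.isLt] at h'
  exact Fin.ext h'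

/-- The completing element of a set: minus its sum mod `d`. -/
def fT (T : Finset (Fin d)) : Fin d := ⟨(- ∑ i ∈ T, zc d i).val, ZMod.val_lt _⟩

lemma zc_fT (T : Finset (Fin d)) : zc d (fT d T) = - ∑ i ∈ T, zc d i := by
  show ((- ∑ i ∈ T, zc d i).val : ZMod d) = _
  rw [ZMod.natCast_val, ZMod.cast_id]

variable (r : ℕ)

/-- Vertices of weight at most `r - 2`. -/
def lowF : Finset (Finset (Fin d)) := univ.filter (fun S => S.card + 2 ≤ r)

/-- Bad `(r-1)`-sets: the completing element lies inside. -/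
def badF : Finset (Finset (Fin d)) :=
  univ.filter (fun S => S.card + 1 = r ∧ fT d S ∈ S)

/-- Good `(r-1)`-sets. -/
def goodF : Finset (Finset (Fin d)) :=
  univ.filter (fun S => S.card + 1 = r ∧ fT d S ∉ S)

/-- The covering family of zero-sum `r`-sets. -/
def covF : Finset (Finset (Fin d)) := (goodF d r).image (fun T => insert (fT d T) T)

lemma goodF_card_le : (goodF d r).card ≤ d.choose (r - 1) := by
  have h : goodF d r ⊆ Finset.powersetCard (r - 1) univ := by
    intro T hT
    rw [goodF, mem_filter] at hT
    rw [Finset.mem_powersetCard]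
    exact ⟨Finset.subset_univ T, by omega⟩
  calc (goodF d r).card ≤ _ := Finset.card_le_card h
    _ = d.choose (r - 1) := by
      rw [Finset.card_powersetCard, Finset.card_univ, Fintype.card_fin]

lemma erase_injOn (S : Finset (Fin d)) :
    ∀ x ∈ S, ∀ y ∈ S, S.erase x = S.erase y → x = y := by
  intro x hx y hy h
  by_contra hxy
  have : x ∈ S.erase y := Finset.mem_erase.2 ⟨hxy, hx⟩
  rw [← h] at this
  exact Finset.notMem_erase x S this

lemma covF_mul_le (hr : 1 ≤ r) : r * (covF d r).card ≤ (goodF d r).card := by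
  refine Finset.mul_card_image_le_card_of_maps_to
    (fun T hT => Finset.mem_image_of_mem _ hT) r ?_
  intro S hS
  simp only [covF, Finset.mem_image] at hS
  obtain ⟨T₀, hT₀, hT₀S⟩ := hS
  rw [goodF, mem_filter] at hT₀
  have hT₀card : T₀.card + 1 = r := hT₀.2.1
  have hT₀f : fT d T₀ ∉ T₀ := hT₀.2.2
  have hScard : S.card = r := by
    rw [← hT₀S, Finset.card_insert_of_notMem hT₀f]; omega
  have hSsum : ∑ i ∈ S, zc d i = 0 := by
    rw [← hT₀S, Finset.sum_insert hT₀f, zc_fT]; ring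
  have himg : S.image (fun x => S.erase x) ⊆
      {T ∈ goodF d r | insert (fT d T) T = S} := by
    intro U hU
    rw [Finset.mem_image] at hU
    obtain ⟨x, hx, rfl⟩ := hU
    have hUsum : ∑ i ∈ S.erase x, zc d i = - zc d x := by
      rw [Finset.sum_erase_eq_sub hx, hSsum]; ring
    have hfU : fT d (S.erase x) = x := by
      apply zc_inj d
      rw [zc_fT, hUsum, neg_neg]
    have hUcard : (S.erase x).card + 1 = r := by
      rw [Finset.card_erase_of_mem hx, hScard]; omega
    rw [mem_filter]
    refine ⟨?_, ?_⟩
    · rw [goodF, mem_filter]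
      exact ⟨Finset.mem_univ _, hUcard, by rw [hfU]; exact Finset.notMem_erase x S⟩
    · rw [hfU, Finset.insert_erase hx]
  calc r = S.card := hScard.symm
    _ = (S.image (fun x => S.erase x)).card :=
        (Finset.card_image_of_injOn (fun x hx y hy => erase_injOn d S x hx y hy)).symm
    _ ≤ _ := Finset.card_le_card himg

lemma two_torsion_unique (a b : ZMod d) (ha : a + a = 0) (hb : b + b = 0)
    (ha0 : a ≠ 0) (hb0 : b ≠ 0) : a = b := by
  have hav : (a.val + a.val) % d = 0 := by
    rw [← ZMod.val_add, ha, ZMod.val_zero]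
  have hbv : (b.val + b.val) % d = 0 := by
    rw [← ZMod.val_add, hb, ZMod.val_zero]
  have had : d ∣ a.val + a.val := Nat.dvd_of_mod_eq_zero hav
  have hbd : d ∣ b.val + b.val := Nat.dvd_of_mod_eq_zero hbv
  have ha1 : a.val < d := ZMod.val_lt a
  have hb1 : b.val < d := ZMod.val_lt b
  have ha2 : a.val ≠ 0 := fun h => ha0 ((ZMod.val_eq_zero a).1 h)
  have hb2 : b.val ≠ 0 := fun h => hb0 ((ZMod.val_eq_zero b).1 h)
  obtain ⟨k, hk⟩ := had
  obtain ⟨l, hl⟩ := hbd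
  have hdpos : 0 < d := Nat.pos_of_ne_zero (NeZero.ne d)
  have hk1 : a.val + a.val = d := by
    rcases Nat.lt_or_ge k 2 with h2 | h2
    · interval_cases k <;> omega
    · have hge : d * 2 ≤ a.val + a.val := by
        rw [hk]; exact Nat.mul_le_mul_left d h2
      omega
  have hl1 : b.val + b.val = d := by
    rcases Nat.lt_or_ge l 2 with h2 | h2
    · interval_cases l <;> omega
    · have hge : d * 2 ≤ b.val + b.val := by
        rw [hl]; exact Nat.mul_le_mul_left d h2
      omega
  have hval : a.val = b.val := by omega
  calc a = (a.val : ZMod d) := by rw [ZMod.natCast_val, ZMod.cast_id]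
    _ = (b.val : ZMod d) := by rw [hval]
    _ = b := by rw [ZMod.natCast_val, ZMod.cast_id]

lemma badF_card_le (hr : 2 ≤ r) : (badF d r).card ≤ 2 * d.choose (r - 2) := by
  have key : (badF d r).card ≤ 2 * ((badF d r).image (fun T => T.erase (fT d T))).card := by
    apply Finset.card_le_mul_card_image
    intro U hU
    by_contra hlt
    push_neg at hlt
    obtain ⟨T₁, T₂, T₃, h₁, h₂, h₃, h12, h13, h23⟩ := Finset.two_lt_card_iff.1 hlt
    have key2 : ∀ T ∈ {T ∈ badF d r | T.erase (fT d T) = U},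
        fT d T ∉ U ∧ T = insert (fT d T) U ∧ zc d (fT d T) + zc d (fT d T) = - ∑ i ∈ U, zc d i := by
      intro T hT
      rw [mem_filter] at hT
      obtain ⟨hTb, hTU⟩ := hT
      rw [badF, mem_filter] at hTb
      have hfT : fT d T ∈ T := hTb.2.2
      have hfU : fT d T ∉ U := by rw [← hTU]; exact Finset.notMem_erase _ _
      have hTi : T = insert (fT d T) U := by rw [← hTU, Finset.insert_erase hfT]
      refine ⟨hfU, hTi, ?_⟩
      have h1 : zc d (fT d T) = - ∑ i ∈ T, zc d i := zc_fT d T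
      have hsum : ∑ i ∈ T, zc d i = zc d (fT d T) + ∑ i ∈ U, zc d i := by
        conv_lhs => rw [hTi]
        rw [Finset.sum_insert hfU]
      linear_combination h1 - hsum
    obtain ⟨hU1, hT1i, he1⟩ := key2 T₁ h₁
    obtain ⟨hU2, hT2i, he2⟩ := key2 T₂ h₂
    obtain ⟨hU3, hT3i, he3⟩ := key2 T₃ h₃
    have hx12 : fT d T₁ ≠ fT d T₂ := fun h => h12 (by rw [hT1i, hT2i, h])
    have hx13 : fT d T₁ ≠ fT d T₃ := fun h => h13 (by rw [hT1i, hT3i, h])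
    have hx23 : fT d T₂ ≠ fT d T₃ := fun h => h23 (by rw [hT2i, hT3i, h])
    set a₁ := zc d (fT d T₁)
    set a₂ := zc d (fT d T₂)
    set a₃ := zc d (fT d T₃)
    have ha12 : a₁ ≠ a₂ := fun h => hx12 (zc_inj d h)
    have ha13 : a₁ ≠ a₃ := fun h => hx13 (zc_inj d h)
    have ha23 : a₂ ≠ a₃ := fun h => hx23 (zc_inj d h)
    have habs : a₁ - a₂ = a₁ - a₃ := by
      apply two_torsion_unique d
      · linear_combination he1 - he2
      · linear_combination he1 - he3
      · exact sub_ne_zero.2 ha12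
      · exact sub_ne_zero.2 ha13
    exact ha23 (by linear_combination -habs)
  refine le_trans key (Nat.mul_le_mul_left 2 ?_)
  have h : (badF d r).image (fun T => T.erase (fT d T)) ⊆
      Finset.powersetCard (r - 2) univ := by
    intro U hU
    rw [Finset.mem_image] at hU
    obtain ⟨T, hT, rfl⟩ := hU
    rw [badF, mem_filter] at hT
    rw [Finset.mem_powersetCard]
    refine ⟨Finset.subset_univ _, ?_⟩
    rw [Finset.card_erase_of_mem hT.2.2]
    omega
  calc _ ≤ _ := Finset.card_le_card h
    _ = d.choose (r - 2) := by
      rw [Finset.card_powersetCard, Finset.card_univ, Fintype.card_fin]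

lemma choose_mono_half (D : ℕ) : ∀ i k : ℕ, i ≤ k → 2 * k ≤ D → D.choose i ≤ D.choose k := by
  intro i k
  induction k with
  | zero =>
    intro h _
    have : i = 0 := by omega
    rw [this]
  | succ k ih =>
    intro h hk
    rcases Nat.lt_or_ge i (k + 1) with h' | h'
    · have h1 : D.choose i ≤ D.choose k := ih (by omega) (by omega)
      have h2 : D.choose k ≤ D.choose (k + 1) :=
        Nat.choose_le_succ_of_lt_half_left (by omega)
      omega
    · have : i = k + 1 := by omega
      rw [this]

lemma lowF_card_le (hr : 2 ≤ r) (hd : 2 * r ≤ d) :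
    (lowF d r).card ≤ r * d.choose (r - 2) := by
  have h : lowF d r ⊆ (Finset.range (r - 1)).biUnion
      (fun i => Finset.powersetCard i univ) := by
    intro T hT
    rw [lowF, mem_filter] at hT
    rw [Finset.mem_biUnion]
    exact ⟨T.card, Finset.mem_range.2 (by omega),
      Finset.mem_powersetCard.2 ⟨Finset.subset_univ _, rfl⟩⟩
  calc (lowF d r).card ≤ _ := Finset.card_le_card h
    _ ≤ ∑ i ∈ Finset.range (r - 1), (Finset.powersetCard i (univ : Finset (Fin d))).card :=
        Finset.card_biUnion_le
    _ ≤ ∑ _i ∈ Finset.range (r - 1), d.choose (r - 2) := by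
        apply Finset.sum_le_sum
        intro i hi
        rw [Finset.card_powersetCard, Finset.card_univ, Fintype.card_fin]
        exact choose_mono_half d i (r - 2) (by
          have := Finset.mem_range.1 hi; omega) (by omega)
    _ = (r - 1) * d.choose (r - 2) := by rw [Finset.sum_const, smul_eq_mul, Finset.card_range]
    _ ≤ r * d.choose (r - 2) := Nat.mul_le_mul_right _ (by omega)

end AuxDesign

section AuxPerc

open Finset

variable (d : ℕ) [NeZero d]

/-- The characteristic vertex of a set of coordinates. -/
def vert (S : Finset (Fin d)) : Fin d → Fin 2 := fun i => if i ∈ S then 1 else 0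

lemma fin2_eq_zero (a : Fin 2) (h : a ≠ 1) : a = 0 := by omega

lemma vert_inj : Function.Injective (vert d) := by
  intro S S' h
  ext i
  have hi := congrFun h i
  constructor
  · intro hS
    by_contra hS'
    simp [vert, hS, hS'] at hi
  · intro hS'
    by_contra hS
    simp [vert, hS, hS'] at hi

lemma adj_vert_erase (S : Finset (Fin d)) {x : Fin d} (hx : x ∈ S) :
    gridAdj 2 d (vert d S) (vert d (S.erase x)) := by
  refine ⟨x, Or.inr ?_, fun j hj => ?_⟩
  · simp [vert, hx, Finset.notMem_erase]
  · simp only [vert, Finset.mem_erase]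
    by_cases hj' : j ∈ S <;> simp [hj, hj']

lemma adj_vert_insert (S : Finset (Fin d)) {x : Fin d} (hx : x ∉ S) :
    gridAdj 2 d (vert d S) (vert d (insert x S)) := by
  refine ⟨x, Or.inl ?_, fun j hj => ?_⟩
  · simp [vert, hx, Finset.mem_insert_self]
  · simp only [vert, Finset.mem_insert]
    by_cases hj' : j ∈ S <;> simp [hj, hj']

variable (r : ℕ)

/-- The percolating set. -/
def AA : Finset (Fin d → Fin 2) :=
  (lowF d r ∪ badF d r ∪ covF d r).image (vert d)

lemma AA_card_le :
    (AA d r).card ≤ (lowF d r).card + (badF d r).card + (covF d r).card := by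
  calc (AA d r).card ≤ (lowF d r ∪ badF d r ∪ covF d r).card := Finset.card_image_le
    _ ≤ (lowF d r ∪ badF d r).card + (covF d r).card := Finset.card_union_le _ _
    _ ≤ (lowF d r).card + (badF d r).card + (covF d r).card :=
        Nat.add_le_add_right (Finset.card_union_le _ _) _

lemma vert_mem_closure (hr : 1 ≤ r) (n : ℕ) :
    ∀ S : Finset (Fin d), S.card = n →
      vert d S ∈ bootClosure (gridAdj 2 d) r (↑(AA d r) : Set (Fin d → Fin 2)) := by
  induction n using Nat.strong_induction_on with
  | _ n ih =>
    intro S hS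
    have hmemAA : ∀ T ∈ lowF d r ∪ badF d r ∪ covF d r,
        vert d T ∈ bootClosure (gridAdj 2 d) r (↑(AA d r) : Set (Fin d → Fin 2)) := by
      intro T hT
      exact subset_bootClosure _ _ _ (Finset.mem_coe.2 (Finset.mem_image_of_mem _ hT))
    have herase : ∀ x ∈ S,
        vert d (S.erase x) ∈ bootClosure (gridAdj 2 d) r (↑(AA d r) : Set (Fin d → Fin 2)) := by
      intro x hx
      have hpos : 0 < S.card := Finset.card_pos.2 ⟨x, hx⟩
      exact ih (S.card - 1) (by omega) _ (by rw [Finset.card_erase_of_mem hx])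
    rcases Nat.lt_or_ge (S.card + 1) r with hc | hc
    · -- low case
      exact hmemAA S (Finset.mem_union_left _ (Finset.mem_union_left _
        (Finset.mem_filter.2 ⟨Finset.mem_univ _, by omega⟩)))
    rcases Nat.lt_or_ge S.card r with hc2 | hc2
    · -- S.card + 1 = r
      have hcard : S.card + 1 = r := by omega
      by_cases hb : fT d S ∈ S
      · exact hmemAA S (Finset.mem_union_left _ (Finset.mem_union_right _
          (Finset.mem_filter.2 ⟨Finset.mem_univ _, hcard, hb⟩)))
      · -- good case
        apply bootClosure_closed
          (insert (vert d (insert (fT d S) S)) (S.image (fun x => vert d (S.erase x))))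
        · -- cardinality
          have himg : (S.image (fun x => vert d (S.erase x))).card = S.card :=
            Finset.card_image_of_injOn (fun x hx y hy h =>
              erase_injOn d S x hx y hy (vert_inj d h))
          have hnot : vert d (insert (fT d S) S) ∉ S.image (fun x => vert d (S.erase x)) := by
            rw [Finset.mem_image]
            rintro ⟨x, hx, hvx⟩
            have := vert_inj d hvx
            have h1 : (S.erase x).card = S.card - 1 := Finset.card_erase_of_mem hx
            have h2 : (insert (fT d S) S).card = S.card + 1 :=
              Finset.card_insert_of_notMem hb
            rw [← this] at h2
            have hpos : 0 < S.card := Finset.card_pos.2 ⟨x, hx⟩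
            omega
          rw [Finset.card_insert_of_notMem hnot, himg]
          omega
        · intro u hu
          rcases Finset.mem_insert.1 hu with rfl | hu'
          · refine ⟨adj_vert_insert d S hb, ?_⟩
            apply hmemAA
            refine Finset.mem_union_right _ ?_
            simp only [covF, Finset.mem_image]
            exact ⟨S, Finset.mem_filter.2 ⟨Finset.mem_univ _, hcard, hb⟩, rfl⟩
          · rw [Finset.mem_image] at hu'
            obtain ⟨x, hx, rfl⟩ := hu'
            exact ⟨adj_vert_erase d S hx, herase x hx⟩
    · -- S.card ≥ r
      apply bootClosure_closed (S.image (fun x => vert d (S.erase x)))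
      · rw [Finset.card_image_of_injOn (fun x hx y hy h =>
          erase_injOn d S x hx y hy (vert_inj d h))]
        omega
      · intro u hu
        rw [Finset.mem_image] at hu
        obtain ⟨x, hx, rfl⟩ := hu
        exact ⟨adj_vert_erase d S hx, herase x hx⟩

lemma AA_percolates (hr : 1 ≤ r) :
    bootClosure (gridAdj 2 d) r (↑(AA d r) : Set (Fin d → Fin 2)) = Set.univ := by
  apply Set.eq_univ_of_forall
  intro v
  have hv : vert d (univ.filter (fun i => v i = 1)) = v := by
    funext i
    by_cases h : v i = 1
    · simp [vert, h]
    · simp [vert, h, fin2_eq_zero (v i) h]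
  rw [← hv]
  exact vert_mem_closure d r hr _ _ rfl

end AuxPerc

/-- `m([2]^d,r) ≤ (1+o(1)) (1/r) C(d,r-1)` as `d → ∞`. -/
theorem minPercCard_upper (r : ℕ) (hr : 1 ≤ r) :
    ∀ ε : ℝ, 0 < ε → ∃ d₀ : ℕ, ∀ d : ℕ, d₀ ≤ d →
      (minPercCard d r : ℝ) ≤ (1 + ε) * (1 / (r : ℝ)) * (d.choose (r - 1) : ℝ) := by
  intro ε hε
  refine ⟨3 * r + ⌈(3 * (r : ℝ) ^ 3) / ε⌉₊ + 1, ?_⟩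
  intro d hd
  haveI : NeZero d := ⟨by omega⟩
  have hperc := AA_percolates d r hr
  have hmin : minPercCard d r ≤ (AA d r).card :=
    Nat.sInf_le ⟨AA d r, rfl, hperc⟩
  have hcard := AA_card_le d r
  have hcov : r * (covF d r).card ≤ d.choose (r - 1) :=
    le_trans (covF_mul_le d r hr) (goodF_card_le d r)
  rcases Nat.lt_or_ge r 2 with hr1 | hr2
  · -- case r = 1
    have hre : r = 1 := by omega
    subst hre
    have hlow : lowF d 1 = ∅ := by
      rw [Finset.eq_empty_iff_forall_notMem]
      intro S hS
      rw [lowF, Finset.mem_filter] at hS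
      omega
    have hbad : badF d 1 = ∅ := by
      rw [Finset.eq_empty_iff_forall_notMem]
      intro S hS
      rw [badF, Finset.mem_filter] at hS
      obtain ⟨-, h1, h2⟩ := hS
      have hSe : S = ∅ := Finset.card_eq_zero.1 (by omega)
      rw [hSe] at h2
      exact absurd h2 (Finset.notMem_empty _)
    have h1 : minPercCard d 1 ≤ 1 := by
      have h2 : (covF d 1).card ≤ 1 := by
        have h3 := hcov
        rw [Nat.choose_zero_right] at h3
        omega
      rw [hlow, hbad] at hcard
      simp only [Finset.card_empty] at hcard
      omega
    have h4 : (minPercCard d 1 : ℝ) ≤ 1 := by exact_mod_cast h1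
    simp only [Nat.sub_self, Nat.choose_zero_right, Nat.cast_one, Nat.cast_ofNat]
    norm_num
    linarith
  · -- case r ≥ 2
    have hd2 : 2 * r ≤ d := by omega
    have hlow := lowF_card_le d r hr2 hd2
    have hbad := badF_card_le d r hr2
    have hid : d.choose (r - 1) * (r - 1) = d.choose (r - 2) * (d - (r - 2)) := by
      have h21 : r - 2 + 1 = r - 1 := by omega
      have h22 := Nat.choose_succ_right_eq d (r - 2)
      rwa [h21] at h22
    have hidR : (d.choose (r - 1) : ℝ) * ((r - 1 : ℕ) : ℝ)
        = (d.choose (r - 2) : ℝ) * ((d - (r - 2) : ℕ) : ℝ) := by exact_mod_cast hid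
    have hF : (r : ℝ) * ((covF d r).card : ℝ) ≤ (d.choose (r - 1) : ℝ) := by
      exact_mod_cast hcov
    have hL : ((lowF d r).card : ℝ) ≤ (r : ℝ) * (d.choose (r - 2) : ℝ) := by
      exact_mod_cast hlow
    have hB : ((badF d r).card : ℝ) ≤ 2 * (d.choose (r - 2) : ℝ) := by
      exact_mod_cast hbad
    have he1b : ((r - 1 : ℕ) : ℝ) ≤ (r : ℝ) := by exact_mod_cast Nat.sub_le r 1
    have hM : (minPercCard d r : ℝ) ≤ ((lowF d r).card : ℝ) + ((badF d r).card : ℝ)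
        + ((covF d r).card : ℝ) := by exact_mod_cast le_trans hmin hcard
    have hnat : ⌈(3 * (r : ℝ) ^ 3) / ε⌉₊ ≤ d - (r - 2) := by omega
    have he2 : 3 * (r : ℝ) ^ 3 / ε ≤ ((d - (r - 2) : ℕ) : ℝ) := by
      calc 3 * (r : ℝ) ^ 3 / ε ≤ (⌈(3 * (r : ℝ) ^ 3) / ε⌉₊ : ℝ) := Nat.le_ceil _
        _ ≤ ((d - (r - 2) : ℕ) : ℝ) := by exact_mod_cast hnat
    set C1 : ℝ := (d.choose (r - 1) : ℝ) with hC1def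
    set C2 : ℝ := (d.choose (r - 2) : ℝ) with hC2def
    set e1 : ℝ := ((r - 1 : ℕ) : ℝ) with he1def
    set e2 : ℝ := ((d - (r - 2) : ℕ) : ℝ) with he2def
    set L : ℝ := ((lowF d r).card : ℝ) with hLdef
    set B : ℝ := ((badF d r).card : ℝ) with hBdef
    set F : ℝ := ((covF d r).card : ℝ) with hFdef
    have hC1 : (0 : ℝ) ≤ C1 := Nat.cast_nonneg _
    have hC2 : (0 : ℝ) ≤ C2 := Nat.cast_nonneg _
    have hrpos : (0 : ℝ) < r := by
      have h0 : (0 : ℕ) < r := by omega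
      exact_mod_cast h0
    have hr2R : (2 : ℝ) ≤ (r : ℝ) := by exact_mod_cast hr2
    have he2pos : (0 : ℝ) < e2 := by
      have hp : (0 : ℝ) < 3 * (r : ℝ) ^ 3 / ε := by positivity
      linarith
    have key1 : (r : ℝ) * (r + 2) * C2 * e2 ≤ ε * C1 * e2 := by
      have s1 : (r : ℝ) * (r + 2) * C2 * e2 = (r : ℝ) * (r + 2) * (C1 * e1) := by
        rw [hidR]; ring
      have s2 : (r : ℝ) * (r + 2) * (C1 * e1) ≤ (r : ℝ) * (r + 2) * (C1 * r) := by
        apply mul_le_mul_of_nonneg_left _ (by positivity)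
        exact mul_le_mul_of_nonneg_left he1b hC1
      have h32 : (r : ℝ) + 2 ≤ 3 * r := by linarith
      have s3 : (r : ℝ) * (r + 2) * (C1 * r) ≤ 3 * (r : ℝ) ^ 3 * C1 := by
        calc (r : ℝ) * (r + 2) * (C1 * r) = ((r : ℝ) * r * (r + 2)) * C1 := by ring
          _ ≤ ((r : ℝ) * r * (3 * r)) * C1 := by
              refine mul_le_mul_of_nonneg_right ?_ hC1
              refine mul_le_mul_of_nonneg_left h32 ?_
              positivity
          _ = 3 * (r : ℝ) ^ 3 * C1 := by ring
      have s4 : 3 * (r : ℝ) ^ 3 * C1 ≤ ε * C1 * e2 := by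
        have h5 : 3 * (r : ℝ) ^ 3 ≤ e2 * ε := (div_le_iff₀ hε).1 he2
        calc 3 * (r : ℝ) ^ 3 * C1 ≤ (e2 * ε) * C1 := mul_le_mul_of_nonneg_right h5 hC1
          _ = ε * C1 * e2 := by ring
      linarith [s1.le, s2, s3, s4]
    have key : (r : ℝ) * (r + 2) * C2 ≤ ε * C1 :=
      le_of_mul_le_mul_right key1 he2pos
    have key2 : (r : ℝ) * L + (r : ℝ) * B ≤ ε * C1 := by
      have t1 : (r : ℝ) * L ≤ (r : ℝ) * ((r : ℝ) * C2) :=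
        mul_le_mul_of_nonneg_left hL hrpos.le
      have t2 : (r : ℝ) * B ≤ (r : ℝ) * (2 * C2) :=
        mul_le_mul_of_nonneg_left hB hrpos.le
      have t3 : (r : ℝ) * ((r : ℝ) * C2) + (r : ℝ) * (2 * C2)
          = (r : ℝ) * (r + 2) * C2 := by ring
      linarith
    have hgoal : (minPercCard d r : ℝ) * r ≤ (1 + ε) * C1 := by
      have p3 : (minPercCard d r : ℝ) * r ≤ (L + B + F) * r :=
        mul_le_mul_of_nonneg_right hM hrpos.le
      linarith [p3, key2, hF]
    rw [show (1 + ε) * (1 / (r : ℝ)) * C1 = ((1 + ε) * C1) / r by ring,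
      le_div_iff₀ hrpos]
    exact hgoal
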